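/- For every n ≥ 1, let a_n denote the number of functions f : {0,1}^n → {0,1} whose phase state v_f is fully separable. Then a_{n+1} = 2 · a_n, and a_1 = 4. -/

import Mathlib

/-- `numSeparable n` is the number of Boolean functions `f : {0,1}^n → {0,1}` whose phase
state `v_f(x) = (-1)^(f x)` is fully separable (a product `ψ₁(x₁) ⋯ ψₙ(xₙ)`). -/
noncomputable def numSeparable (n : ℕ) : ℕ :=
  Nat.card {f : (Fin n → Bool) → Bool //
    ∃ ψ : Fin n → Bool → ℂ,
      ∀ x : Fin n → Bool, ((-1 : ℂ) ^ (f x).toNat) = ∏ i : Fin n, ψ i (x i)}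

namespace NumSepAux

noncomputable def χ (z : ZMod 2) : ℂ := if z = 0 then 1 else -1

def bz (b : Bool) : ZMod 2 := if b then 1 else 0

@[simp] lemma bz_false : bz false = 0 := rfl
@[simp] lemma bz_true : bz true = 1 := rfl

lemma zc (z : ZMod 2) : z = 0 ∨ z = 1 := by revert z; decide

lemma chi_add (z w : ZMod 2) : χ (z + w) = χ z * χ w := by
  rcases zc z with rfl | rfl <;> rcases zc w with rfl | rfl <;>
    simp [χ, show (1 + 1 : ZMod 2) = 0 by decide] <;> norm_num

lemma chi_ne_zero (z : ZMod 2) : χ z ≠ 0 := by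
  rcases zc z with rfl | rfl <;> simp [χ]

lemma chi_inj {z w : ZMod 2} (h : χ z = χ w) : z = w := by
  rcases zc z with rfl | rfl <;> rcases zc w with rfl | rfl <;> simp_all [χ] <;> norm_num at h

lemma chi_bz (b : Bool) : ((-1 : ℂ) ^ b.toNat) = χ (bz b) := by
  cases b <;> simp [χ]

lemma chi_decide (z : ZMod 2) : ((-1 : ℂ) ^ (decide (z = 1)).toNat) = χ z := by
  rcases zc z with rfl | rfl <;> simp [χ]

lemma bz_xor (b c : Bool) : bz (b != c) = bz b + bz c := by
  cases b <;> cases c <;> simp <;> decide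

lemma decide_bz (b : Bool) : decide (bz b = 1) = b := by
  cases b <;> simp

lemma bz_inj : ∀ {b c : Bool}, bz b = bz c → b = c := by decide

lemma zdec_inj : ∀ {z w : ZMod 2}, decide (z = 1) = decide (w = 1) → z = w := by decide

lemma chi_sum {n : ℕ} (u : Fin n → ZMod 2) :
    χ (∑ i, u i) = ∏ i, χ (u i) := by
  classical
  induction (Finset.univ : Finset (Fin n)) using Finset.cons_induction with
  | empty => simp [χ]
  | cons a s h ih => rw [Finset.sum_cons, Finset.prod_cons, chi_add, ih]

lemma chi_div (b c : Bool) :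
    ((-1 : ℂ) ^ b.toNat) / ((-1 : ℂ) ^ c.toNat) = χ (bz b + bz c) := by
  cases b <;> cases c <;>
    simp [χ, show (1 + 1 : ZMod 2) = 0 by decide] <;> norm_num

end NumSepAux

open NumSepAux in
lemma numSep_card (n : ℕ) (hn : 1 ≤ n) : numSeparable n = 2 * 2 ^ n := by
  classical
  have i0 : Fin n := ⟨0, hn⟩
  set P : Bool × (Fin n → Bool) → (Fin n → Bool) → Bool :=
    fun p x => decide (bz p.1 + ∑ i, bz (p.2 i) * bz (x i) = 1) with hP
  set e : Fin n → (Fin n → Bool) := fun j i => decide (i = j) with he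
  have sum_e : ∀ (a : Fin n → Bool) (j : Fin n),
      ∑ i, bz (a i) * bz (e j i) = bz (a j) := by
    intro a j
    rw [show ∑ i, bz (a i) * bz (e j i) = ∑ i, if i = j then bz (a i) else 0 from
      Finset.sum_congr rfl (fun i _ => by by_cases h : i = j <;> simp [he, h])]
    simp
  have hmem : ∀ p, ∃ ψ : Fin n → Bool → ℂ,
      ∀ x, ((-1 : ℂ) ^ (P p x).toNat) = ∏ i, ψ i (x i) := by
    rintro ⟨c, a⟩
    refine ⟨fun i b => χ (bz c * (if i = i0 then 1 else 0) + bz (a i) * bz b),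
      fun x => ?_⟩
    rw [hP, chi_decide, ← chi_sum]
    congr 1
    rw [Finset.sum_add_distrib, ← Finset.mul_sum]
    congr 1
    simp
  let G : Bool × (Fin n → Bool) →
      {f : (Fin n → Bool) → Bool //
        ∃ ψ : Fin n → Bool → ℂ,
          ∀ x : Fin n → Bool, ((-1 : ℂ) ^ (f x).toNat) = ∏ i : Fin n, ψ i (x i)} :=
    fun p => ⟨P p, hmem p⟩
  have hinj : Function.Injective G := by
    rintro ⟨c, a⟩ ⟨c', a'⟩ h
    have hfun : P (c, a) = P (c', a') := congrArg Subtype.val h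
    have hzero : bz c = bz c' := by
      have h1 := zdec_inj (congrFun hfun (fun _ => false))
      simpa using h1
    have hc : c = c' := bz_inj hzero
    have ha : a = a' := by
      funext j
      have h2 := zdec_inj (congrFun hfun (e j))
      rw [sum_e, sum_e, hzero] at h2
      exact bz_inj (add_left_cancel h2)
    rw [hc, ha]
  have hsurj : Function.Surjective G := by
    rintro ⟨f, ψ, hψ⟩
    set z0 : Fin n → Bool := fun _ => false with hz0
    have hprod0 : ∏ i, ψ i false = ((-1 : ℂ) ^ (f z0).toNat) := (hψ z0).symm
    have hne : ∀ i, ψ i false ≠ 0 := by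
      intro i
      have hp : (∏ i, ψ i false) ≠ 0 := by
        rw [hprod0]; exact pow_ne_zero _ (by norm_num)
      exact Finset.prod_ne_zero_iff.mp hp i (Finset.mem_univ i)
    set a : Fin n → Bool := fun j => f (e j) != f z0 with ha
    have hratio : ∀ j, ψ j true / ψ j false = χ (bz (a j)) := by
      intro j
      have hj := hψ (e j)
      have hsplit : ∏ i, ψ i (e j i)
          = ψ j true * ∏ i ∈ Finset.univ.erase j, ψ i false := by
        rw [← Finset.mul_prod_erase Finset.univ _ (Finset.mem_univ j)]
        congr 1
        · simp [he]
        · exact Finset.prod_congr rfl (fun i hi => by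
            simp [he, Finset.ne_of_mem_erase hi])
      have hsplit0 : ∏ i, ψ i false
          = ψ j false * ∏ i ∈ Finset.univ.erase j, ψ i false :=
        (Finset.mul_prod_erase Finset.univ _ (Finset.mem_univ j)).symm
      have hQ : (∏ i ∈ Finset.univ.erase j, ψ i false) ≠ 0 :=
        Finset.prod_ne_zero_iff.mpr (fun i _ => hne i)
      have key : ((-1 : ℂ) ^ (f (e j)).toNat) / ((-1 : ℂ) ^ (f z0).toNat)
          = ψ j true / ψ j false := by
        rw [hj, ← hprod0, hsplit, hsplit0,
          div_eq_div_iff (by exact mul_ne_zero (hne j) hQ)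
            (by exact hne j)]
        ring
      rw [← key, chi_div, ha]
      simp only [bz_xor]
    refine ⟨(f z0, a), ?_⟩
    apply Subtype.ext
    funext x
    show P (f z0, a) x = f x
    rw [hP]
    simp only
    rw [show bz (f z0) + ∑ i, bz (a i) * bz (x i) = bz (f x) from ?_, decide_bz]
    apply chi_inj
    rw [chi_add, chi_sum, ← chi_bz, ← chi_bz, hψ x, hψ z0, ← Finset.prod_mul_distrib]
    refine Finset.prod_congr rfl (fun i _ => ?_)
    have hzi : z0 i = false := rfl
    cases hx : x i
    · simp [hzi, χ]
    · rw [hzi, show bz (a i) * bz true = bz (a i) by simp, ← hratio i]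
      exact mul_div_cancel₀ _ (hne i)
  have hcard : numSeparable n = Nat.card (Bool × (Fin n → Bool)) :=
    (Nat.card_congr (Equiv.ofBijective G ⟨hinj, hsurj⟩)).symm
  rw [hcard, Nat.card_eq_fintype_card]
  simp [Fintype.card_prod, Fintype.card_fun]

/-- The recurrence `a_{n+1} = 2 a_n` for `n ≥ 1`, together with the base case `a_1 = 4`,
for the number `a_n` of Boolean functions on `n` bits with fully separable phase state. -/
theorem numSeparable_recurrence :
    (∀ n, 1 ≤ n → numSeparable (n + 1) = 2 * numSeparable n) ∧ numSeparable 1 = 4 := by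
  constructor
  · intro n hn
    rw [numSep_card n hn, numSep_card (n + 1) (by omega)]
    ring
  · rw [numSep_card 1 le_rfl]; norm_num
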